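/- arXiv:2509.12930 — 2 statements merged into one kernel-verified Lean document; each statement's English description precedes it below -/
import Mathlib

section
/- Suppose the global gradient satisfies ∇H(θ) = ∑_{k∈K_m} w̄_k ∇H_k(θ) with w̄_k ≥ 0, ∑_{k∈K_m} w̄_k = 1, and ‖∇H_k(θ) − ∇H(θ)‖ ≤ δ_k. Let K' ⊆ K_m be the participating set with weights w'_k ≥ 0 summing to 1 over K', where w'_k ≥ w̄_k for k ∈ K'. Then ‖∑_{k∈K'} w'_k ∇H_k(θ) − ∇H(θ)‖² ≤ 2(1 − ∑_{k∈K'} w̄_k) · ∑_{k∈K_m} (w'_k + w̄_k − 2·[k∈K']·w̄_k) δ_k², where w'_k = 0 for k ∉ K' and [k∈K'] is the indicator. -/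
open Finset

lemma aux_sq_sum_bound {ι : Type*} {E : Type*} [NormedAddCommGroup E] [InnerProductSpace ℝ E]
    (T : Finset ι) (c δ : ι → ℝ) (v : ι → E)
    (hc : ∀ k ∈ T, 0 ≤ c k) (hv : ∀ k ∈ T, ‖v k‖ ≤ δ k) :
    ‖∑ k ∈ T, c k • v k‖ ^ 2 ≤ (∑ k ∈ T, c k) * ∑ k ∈ T, c k * δ k ^ 2 := by
  have hδ : ∀ k ∈ T, 0 ≤ δ k := fun k hk => (norm_nonneg _).trans (hv k hk)
  have h1 : ‖∑ k ∈ T, c k • v k‖ ≤ ∑ k ∈ T, c k * δ k := by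
    refine (norm_sum_le _ _).trans (Finset.sum_le_sum fun k hk => ?_)
    rw [norm_smul, Real.norm_eq_abs, abs_of_nonneg (hc k hk)]
    exact mul_le_mul_of_nonneg_left (hv k hk) (hc k hk)
  have h2 : (∑ k ∈ T, c k * δ k) ^ 2 ≤ (∑ k ∈ T, c k) * ∑ k ∈ T, c k * δ k ^ 2 := by
    have heq : ∑ k ∈ T, c k * δ k
        = ∑ k ∈ T, Real.sqrt (c k) * (Real.sqrt (c k) * δ k) := by
      refine Finset.sum_congr rfl fun k hk => ?_
      rw [← mul_assoc, Real.mul_self_sqrt (hc k hk)]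
    have hcs := Finset.sum_mul_sq_le_sq_mul_sq T
      (fun k => Real.sqrt (c k)) (fun k => Real.sqrt (c k) * δ k)
    rw [heq]
    refine hcs.trans_eq ?_
    congr 1
    · exact Finset.sum_congr rfl fun k hk => Real.sq_sqrt (hc k hk)
    · refine Finset.sum_congr rfl fun k hk => ?_
      rw [mul_pow, Real.sq_sqrt (hc k hk)]
  calc ‖∑ k ∈ T, c k • v k‖ ^ 2 ≤ (∑ k ∈ T, c k * δ k) ^ 2 :=
        pow_le_pow_left₀ (norm_nonneg _) h1 2
    _ ≤ _ := h2

theorem participated_gradient_deviation_bound {ι : Type*} [DecidableEq ι]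
    {E : Type*} [NormedAddCommGroup E] [InnerProductSpace ℝ E]
    (Km K' : Finset ι) (hsub : K' ⊆ Km) (hK' : K'.Nonempty)
    (wbar w' : ι → ℝ) (δ : ι → ℝ) (gradHk : ι → E) (gradH : E)
    (hwbar_nonneg : ∀ k ∈ Km, 0 ≤ wbar k)
    (hwbar_sum : ∑ k ∈ Km, wbar k = 1)
    (hw'_nonneg : ∀ k ∈ Km, 0 ≤ w' k)
    (hw'_supp : ∀ k ∈ Km, k ∉ K' → w' k = 0)
    (hw'_sum : ∑ k ∈ K', w' k = 1)
    (hw'_ge : ∀ k ∈ K', wbar k ≤ w' k)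
    (hgradH : gradH = ∑ k ∈ Km, wbar k • gradHk k)
    (hdiv : ∀ k ∈ Km, ‖gradHk k - gradH‖ ≤ δ k) :
    ‖(∑ k ∈ K', w' k • gradHk k) - gradH‖ ^ 2 ≤
      2 * (1 - ∑ k ∈ K', wbar k) *
        ∑ k ∈ Km, (w' k + wbar k - 2 * (if k ∈ K' then (1 : ℝ) else 0) * wbar k) * δ k ^ 2 := by
  set S := ∑ k ∈ K', wbar k with hS
  have hsdiff : Km \ K' ⊆ Km := Finset.sdiff_subset
  have hα : ∑ k ∈ Km \ K', wbar k = 1 - S := by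
    have := Finset.sum_sdiff (f := wbar) hsub
    linarith [this, hwbar_sum]
  have hαnn : 0 ≤ 1 - S := by
    rw [← hα]
    exact Finset.sum_nonneg fun k hk => hwbar_nonneg k (hsdiff hk)
  set A := ∑ k ∈ K', (w' k - wbar k) • (gradHk k - gradH) with hAdef
  set B := ∑ k ∈ Km \ K', wbar k • (gradHk k - gradH) with hBdef
  have hcoefA : ∑ k ∈ K', (w' k - wbar k) = 1 - S := by
    rw [Finset.sum_sub_distrib, hw'_sum]
  have hA : A = (∑ k ∈ K', w' k • gradHk k) - (∑ k ∈ K', wbar k • gradHk k)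
      - (1 - S) • gradH := by
    rw [hAdef]
    simp only [sub_smul, smul_sub, Finset.sum_sub_distrib, ← Finset.sum_smul,
      hw'_sum, hS]
  have hB : B = (∑ k ∈ Km \ K', wbar k • gradHk k) - (1 - S) • gradH := by
    rw [hBdef]
    simp only [smul_sub, Finset.sum_sub_distrib, ← Finset.sum_smul, hα]
  have hkey : (∑ k ∈ K', w' k • gradHk k) - gradH = A - B := by
    rw [hA, hB, hgradH, ← Finset.sum_sdiff hsub]
    abel
  have hA2 : ‖A‖ ^ 2 ≤ (1 - S) * ∑ k ∈ K', (w' k - wbar k) * δ k ^ 2 := by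
    have := aux_sq_sum_bound K' (fun k => w' k - wbar k) δ (fun k => gradHk k - gradH)
      (fun k hk => sub_nonneg.mpr (hw'_ge k hk)) (fun k hk => hdiv k (hsub hk))
    rwa [hcoefA] at this
  have hB2 : ‖B‖ ^ 2 ≤ (1 - S) * ∑ k ∈ Km \ K', wbar k * δ k ^ 2 := by
    have := aux_sq_sum_bound (Km \ K') wbar δ (fun k => gradHk k - gradH)
      (fun k hk => hwbar_nonneg k (hsdiff hk)) (fun k hk => hdiv k (hsdiff hk))
    rwa [hα] at this
  have hRHS : ∑ k ∈ Km, (w' k + wbar k - 2 * (if k ∈ K' then (1 : ℝ) else 0) * wbar k) * δ k ^ 2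
      = ∑ k ∈ K', (w' k - wbar k) * δ k ^ 2 + ∑ k ∈ Km \ K', wbar k * δ k ^ 2 := by
    rw [← Finset.sum_sdiff hsub, add_comm]
    congr 1
    · refine Finset.sum_congr rfl fun k hk => ?_
      simp only [if_pos hk]; ring
    · refine Finset.sum_congr rfl fun k hk => ?_
      have hk2 := Finset.mem_sdiff.mp hk
      simp only [if_neg hk2.2, hw'_supp k hk2.1 hk2.2]; ring
  have htri : ‖A - B‖ ≤ ‖A‖ + ‖B‖ := norm_sub_le A B
  rw [hkey, hRHS]
  nlinarith [sq_nonneg (‖A‖ - ‖B‖), norm_nonneg A, norm_nonneg B, norm_nonneg (A - B),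
    sq_nonneg (‖A‖ + ‖B‖)]
end

section
/- The function J(B) = A / (B · log₂(1 + c/B)) is strictly decreasing and convex in B on (0, ∞), for constants A > 0 and c > 0. -/
section aux

variable {c : ℝ}

private noncomputable def gfun (c : ℝ) (B : ℝ) : ℝ := B * (Real.log (B + c) - Real.log B)

private noncomputable def gfun' (c : ℝ) (B : ℝ) : ℝ :=
  Real.log (B + c) - Real.log B - c / (B + c)

private noncomputable def gfun'' (c : ℝ) (B : ℝ) : ℝ :=
  1 / (B + c) - 1 / B + c / (B + c) ^ 2

private lemma gfun_pos (hc : 0 < c) {B : ℝ} (hB : 0 < B) : 0 < gfun c B := by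
  have h : Real.log B < Real.log (B + c) := Real.log_lt_log hB (by linarith)
  have : 0 < Real.log (B + c) - Real.log B := by linarith
  exact mul_pos hB this

private lemma hasDerivAt_gfun (hc : 0 < c) {B : ℝ} (hB : 0 < B) :
    HasDerivAt (gfun c) (gfun' c B) B := by
  have hBc : (0:ℝ) < B + c := by linarith
  have h1 : HasDerivAt (fun x : ℝ => Real.log (x + c)) (1 / (B + c)) B := by
    have := ((hasDerivAt_id B).add_const c).log hBc.ne'
    simpa using this
  have h2 : HasDerivAt Real.log (1 / B) B := by
    simpa [one_div] using Real.hasDerivAt_log hB.ne'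
  have := (hasDerivAt_id B).mul (h1.sub h2)
  convert this using 1
  · rfl
  · rfl
  · rfl
  unfold gfun'
  simp only [Pi.sub_apply, id_eq]
  field_simp
  ring

private lemma hasDerivAt_gfun' (hc : 0 < c) {B : ℝ} (hB : 0 < B) :
    HasDerivAt (gfun' c) (gfun'' c B) B := by
  have hBc : (0:ℝ) < B + c := by linarith
  have h1 : HasDerivAt (fun x : ℝ => Real.log (x + c)) (1 / (B + c)) B := by
    have := ((hasDerivAt_id B).add_const c).log hBc.ne'
    simpa using this
  have h2 : HasDerivAt Real.log (1 / B) B := by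
    simpa [one_div] using Real.hasDerivAt_log hB.ne'
  have h3 : HasDerivAt (fun x : ℝ => c / (x + c)) (-(c / (B + c) ^ 2)) B := by
    have hinv : HasDerivAt (fun x : ℝ => (x + c)⁻¹) (-1 / (B + c) ^ 2) B := by
      simpa [Pi.inv_def] using ((hasDerivAt_id B).add_const c).inv hBc.ne'
    have := hinv.const_mul c
    convert this using 1
    · rfl
    · rfl
    field_simp
    ring
  have := (h1.sub h2).sub h3
  convert this using 1
  · rfl
  · rfl
  · rfl
  unfold gfun''
  ring

private lemma gfun'_pos (hc : 0 < c) {B : ℝ} (hB : 0 < B) : 0 < gfun' c B := by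
  have hBc : (0:ℝ) < B + c := by linarith
  have hx : (0:ℝ) < B / (B + c) := div_pos hB hBc
  have hne : B / (B + c) ≠ 1 := by
    intro h
    have : B = B + c := by
      field_simp at h; linarith
    linarith
  have hlog : Real.log (B / (B + c)) < B / (B + c) - 1 :=
    Real.log_lt_sub_one_of_pos hx hne
  rw [Real.log_div hB.ne' hBc.ne'] at hlog
  have hkey : B / (B + c) - 1 = -(c / (B + c)) := by field_simp; ring
  rw [hkey] at hlog
  unfold gfun'
  linarith

private lemma gfun''_nonpos (hc : 0 < c) {B : ℝ} (hB : 0 < B) : gfun'' c B ≤ 0 := by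
  have hBc : (0:ℝ) < B + c := by linarith
  have : gfun'' c B = -(c ^ 2 / (B * (B + c) ^ 2)) := by
    unfold gfun''
    field_simp
    ring
  rw [this]
  have : 0 < c ^ 2 / (B * (B + c) ^ 2) := by positivity
  linarith

private lemma gfun_strictMonoOn (hc : 0 < c) : StrictMonoOn (gfun c) (Set.Ioi 0) := by
  apply strictMonoOn_of_deriv_pos (convex_Ioi 0)
  · exact fun x hx => (hasDerivAt_gfun hc hx).continuousAt.continuousWithinAt
  · intro x hx
    rw [interior_Ioi] at hx
    rw [(hasDerivAt_gfun hc hx).deriv]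
    exact gfun'_pos hc hx

private lemma gfun_concaveOn (hc : 0 < c) : ConcaveOn ℝ (Set.Ioi 0) (gfun c) := by
  apply concaveOn_of_hasDerivWithinAt2_nonpos (f' := gfun' c) (f'' := gfun'' c) (convex_Ioi 0)
  · exact fun x hx => (hasDerivAt_gfun hc hx).continuousAt.continuousWithinAt
  · intro x hx
    rw [interior_Ioi] at hx
    exact (hasDerivAt_gfun hc hx).hasDerivWithinAt
  · intro x hx
    rw [interior_Ioi] at hx
    exact (hasDerivAt_gfun' hc hx).hasDerivWithinAt
  · intro x hx
    rw [interior_Ioi] at hx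
    exact gfun''_nonpos hc hx

private lemma J_eq (A : ℝ) (hc : 0 < c) {B : ℝ} (hB : 0 < B) :
    A / (B * Real.log (1 + c / B) / Real.log 2) = A * Real.log 2 / gfun c B := by
  have hBc : (0:ℝ) < B + c := by linarith
  have h1 : 1 + c / B = (B + c) / B := by field_simp
  rw [div_div_eq_mul_div, h1, Real.log_div hBc.ne' hB.ne']
  rfl

end aux

theorem J_strict_anti_convex (A c : ℝ) (hA : 0 < A) (hc : 0 < c) :
    StrictAntiOn (fun B : ℝ => A / (B * Real.log (1 + c / B) / Real.log 2))
      (Set.Ioi 0) ∧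
    ConvexOn ℝ (Set.Ioi 0)
      (fun B : ℝ => A / (B * Real.log (1 + c / B) / Real.log 2)) := by
  have hlog2 : (0:ℝ) < Real.log 2 := Real.log_pos one_lt_two
  set K := A * Real.log 2 with hK
  have hKpos : 0 < K := mul_pos hA hlog2
  constructor
  · intro x hx y hy hxy
    simp only [Set.mem_Ioi] at hx hy
    simp only
    rw [J_eq A hc hx, J_eq A hc hy]
    exact div_lt_div_of_pos_left hKpos (gfun_pos hc hx)
      (gfun_strictMonoOn hc hx hy hxy)
  · refine ⟨convex_Ioi 0, ?_⟩
    intro x hx y hy a b ha hb hab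
    have hz : a • x + b • y ∈ Set.Ioi (0:ℝ) := (convex_Ioi 0) hx hy ha hb hab
    simp only [Set.mem_Ioi] at hx hy hz
    simp only [smul_eq_mul] at *
    rw [J_eq A hc hx, J_eq A hc hy, J_eq A hc hz]
    set gx := gfun c x with hgx
    set gy := gfun c y with hgy
    have hgxp : 0 < gx := gfun_pos hc hx
    have hgyp : 0 < gy := gfun_pos hc hy
    have hmid : 0 < a * gx + b * gy := by
      have hm : 0 < min gx gy := lt_min hgxp hgyp
      nlinarith [mul_le_mul_of_nonneg_left (min_le_left gx gy) ha,
        mul_le_mul_of_nonneg_left (min_le_right gx gy) hb]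
    have hconc : a * gx + b * gy ≤ gfun c (a * x + b * y) := by
      have := (gfun_concaveOn hc).2 (Set.mem_Ioi.2 hx) (Set.mem_Ioi.2 hy) ha hb hab
      simpa [smul_eq_mul] using this
    have step1 : K / gfun c (a * x + b * y) ≤ K / (a * gx + b * gy) :=
      div_le_div_of_nonneg_left hKpos.le hmid hconc
    have step2 : K / (a * gx + b * gy) ≤ a * (K / gx) + b * (K / gy) := by
      have expand : a * (K / gx) + b * (K / gy) = (a * K * gy + b * K * gx) / (gx * gy) := by
        field_simp
      rw [expand, div_le_div_iff₀ hmid (by positivity)]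
      have key : 0 ≤ K * (a * b) * (gx - gy) ^ 2 := by positivity
      have hid : (a * K * gy + b * K * gx) * (a * gx + b * gy) - K * (gx * gy)
          = K * (a * b) * (gx - gy) ^ 2 := by
        have hb' : b = 1 - a := by linarith
        rw [hb']; ring
      linarith [key, hid]
    calc K / gfun c (a * x + b * y) ≤ K / (a * gx + b * gy) := step1
      _ ≤ a * (K / gx) + b * (K / gy) := step2
end
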